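/- Let X be a bounded positive injective operator on a Hilbert space H and V an isometry with V*XV = X. Then for every f in the domain of √X⁻¹, ‖√X V √X⁻¹ f‖ = ‖f‖. -/

import Mathlib

/-- Let `X` be a bounded positive injective operator on a Hilbert space, `V` an isometry
with `V* X V = X`, and `S = √X` the positive square root of `X`.  Then for every `f = S g`
in the domain of `√X⁻¹` (i.e. the range of `S`), `‖√X V √X⁻¹ f‖ = ‖S (V g)‖ = ‖S g‖ = ‖f‖`. -/
theorem stmt8 {H : Type*} [NormedAddCommGroup H] [InnerProductSpace ℂ H] [CompleteSpace H]
    (X V S : H →L[ℂ] H) (hX : X.IsPositive) (hXinj : Function.Injective X)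
    (hV : ∀ x : H, ‖V x‖ = ‖x‖)
    (hVX : ContinuousLinearMap.adjoint V ∘L X ∘L V = X)
    (hS : S.IsPositive) (hSsq : S ∘L S = X) :
    ∀ g : H, ‖S (V g)‖ = ‖S g‖ := by
  intro g
  have hSa : ContinuousLinearMap.adjoint S = S := hS.isSelfAdjoint.adjoint_eq
  have key : ∀ x : H, (‖S x‖ : ℂ) ^ 2 = inner ℂ x (X x) := by
    intro x
    have h1 : (inner ℂ (S x) (S x) : ℂ) = (‖S x‖ : ℂ) ^ 2 :=
      inner_self_eq_norm_sq_to_K (𝕜 := ℂ) (S x)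
    have h2 : (inner ℂ (S x) (S x) : ℂ) = inner ℂ x (S (S x)) := by
      rw [← ContinuousLinearMap.adjoint_inner_right S, hSa]
    have h3 : S (S x) = X x := by
      rw [← hSsq]; rfl
    rw [← h1, h2, h3]
  have hVg : (inner ℂ (V g) (X (V g)) : ℂ) = inner ℂ g (X g) := by
    have := congrArg (fun T : H →L[ℂ] H => (inner ℂ g (T g) : ℂ)) hVX
    simp only [ContinuousLinearMap.comp_apply] at this
    rw [← this, ContinuousLinearMap.adjoint_inner_right]
  have : (‖S (V g)‖ : ℂ) ^ 2 = (‖S g‖ : ℂ) ^ 2 := by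
    rw [key, key, hVg]
  have hr : ‖S (V g)‖ ^ 2 = ‖S g‖ ^ 2 := by
    exact_mod_cast this
  nlinarith [norm_nonneg (S (V g)), norm_nonneg (S g)]
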